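/- Let K ⊆ ℝ² be a closed convex set with at most one recession direction (i.e., the set of unit vectors that are limits of x_n/‖x_n‖ for sequences x_n ∈ K with ‖x_n‖ → ∞ has at most one element). Then the boundary ∂K is homogenization-convex: the closure of {τx : τ ≥ 0, x ∈ ∂K} is convex. -/

import Mathlib

/-- The homogeneous hull of a set: `{τ • x : τ ≥ 0, x ∈ C}`. -/
def homHull (C : Set (ℝ × ℝ)) : Set (ℝ × ℝ) :=
  {y | ∃ τ : ℝ, 0 ≤ τ ∧ ∃ x ∈ C, y = τ • x}

/-- The set of recession directions of `C`: unit vectors that are approximated by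
spherical projections of arbitrarily large elements of `C`. -/
def recDirections (C : Set (ℝ × ℝ)) : Set (ℝ × ℝ) :=
  {s | ‖s‖ = 1 ∧ ∀ τ ε : ℝ, 0 < τ → 0 < ε →
    ∃ x ∈ C, τ < ‖x‖ ∧ ‖s - ‖x‖⁻¹ • x‖ < ε}

lemma homHull_smul_mem {C : Set (ℝ × ℝ)} {τ : ℝ} (hτ : 0 ≤ τ) {y : ℝ × ℝ}
    (hy : y ∈ homHull C) : τ • y ∈ homHull C := by
  obtain ⟨σ, hσ, x, hx, rfl⟩ := hy
  exact ⟨τ * σ, mul_nonneg hτ hσ, x, hx, smul_smul τ σ x⟩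

lemma convex_homHull {C : Set (ℝ × ℝ)} (hC : Convex ℝ C) : Convex ℝ (homHull C) := by
  rintro p ⟨τ₁, hτ₁, x₁, hx₁, rfl⟩ q ⟨τ₂, hτ₂, x₂, hx₂, rfl⟩ a b ha hb hab
  have h1 : 0 ≤ a * τ₁ := mul_nonneg ha hτ₁
  have h2 : 0 ≤ b * τ₂ := mul_nonneg hb hτ₂
  set σ := a * τ₁ + b * τ₂ with hσdef
  rcases eq_or_lt_of_le (add_nonneg h1 h2) with hσ | hσ
  · refine ⟨0, le_refl 0, x₁, hx₁, ?_⟩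
    have e1 : a * τ₁ = 0 := by nlinarith
    have e2 : b * τ₂ = 0 := by nlinarith
    rw [smul_smul, smul_smul, e1, e2]
    simp
  · refine ⟨σ, hσ.le, (a * τ₁ / σ) • x₁ + (b * τ₂ / σ) • x₂,
      hC hx₁ hx₂ (div_nonneg h1 hσ.le) (div_nonneg h2 hσ.le) (by field_simp; exact div_self hσ.ne'), ?_⟩
    rw [smul_add, smul_smul, smul_smul, smul_smul, smul_smul]
    have hσ0 : σ ≠ 0 := hσ.ne'
    congr 1 <;> congr 1 <;> field_simp

lemma mem_homHull_frontier_of_ray_exits {K : Set (ℝ × ℝ)} (hKcl : IsClosed K)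
    (hKcv : Convex ℝ K) {y : ℝ × ℝ} (hy : y ∈ K) (hy0 : y ≠ 0)
    {t₀ : ℝ} (ht₀ : 1 ≤ t₀) (hout : t₀ • y ∉ K) : y ∈ homHull (frontier K) := by
  set S : Set ℝ := {t | 1 ≤ t ∧ t • y ∈ K} with hSdef
  have hne : (1:ℝ) ∈ S := ⟨le_refl 1, by simpa using hy⟩
  have hub : ∀ t ∈ S, t ≤ t₀ := by
    rintro t ⟨ht1, htK⟩
    by_contra h
    push_neg at h
    apply hout
    have ht1' : (1:ℝ) < t := lt_of_le_of_lt ht₀ h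
    have hd : (0:ℝ) < t - 1 := by linarith
    have key : ((t - t₀)/(t-1)) • y + ((t₀-1)/(t-1)) • (t • y) = t₀ • y := by
      rw [smul_smul, ← add_smul]
      congr 1
      field_simp
      ring
    rw [← key]
    exact hKcv hy htK (div_nonneg (by linarith) hd.le) (div_nonneg (by linarith) hd.le)
      (by field_simp; ring)
  have hbdd : BddAbove S := ⟨t₀, hub⟩
  have hScl : IsClosed S := by
    have : S = {t : ℝ | 1 ≤ t} ∩ (fun t : ℝ => t • y) ⁻¹' K := rfl
    rw [this]
    exact (isClosed_le continuous_const continuous_id).inter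
      (hKcl.preimage (continuous_id.smul continuous_const))
  set ts := sSup S with hts
  have htsS : ts ∈ S := hScl.csSup_mem ⟨1, hne⟩ hbdd
  have hts1 : (1:ℝ) ≤ ts := htsS.1
  have htspos : (0:ℝ) < ts := lt_of_lt_of_le one_pos hts1
  have hyn : (0:ℝ) < ‖y‖ := norm_pos_iff.mpr hy0
  have hfr : ts • y ∈ frontier K := by
    rw [frontier_eq_closure_inter_closure]
    refine ⟨subset_closure htsS.2, ?_⟩
    rw [Metric.mem_closure_iff]
    intro ε hε
    set ε' := ε / (2 * ‖y‖) with hε'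
    have hε'pos : 0 < ε' := by positivity
    refine ⟨(ts + ε') • y, ?_, ?_⟩
    · intro hK
      have : ts + ε' ∈ S := ⟨by linarith, hK⟩
      have := le_csSup hbdd this
      linarith
    · rw [dist_eq_norm, ← sub_smul, norm_smul, Real.norm_eq_abs]
      have : |ts - (ts + ε')| = ε' := by rw [abs_sub_comm]; simp [abs_of_pos hε'pos]
      rw [this, hε']
      rw [div_mul_eq_mul_div, div_lt_iff₀ (by positivity)]
      nlinarith
  exact ⟨ts⁻¹, by positivity, ts • y, hfr, by rw [inv_smul_smul₀ htspos.ne']⟩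

lemma recDir_of_ray {K : Set (ℝ × ℝ)} {y : ℝ × ℝ} (hy0 : y ≠ 0)
    (hray : ∀ t : ℝ, 1 ≤ t → t • y ∈ K) : ‖y‖⁻¹ • y ∈ recDirections K := by
  have hyn : (0:ℝ) < ‖y‖ := norm_pos_iff.mpr hy0
  constructor
  · rw [norm_smul, Real.norm_eq_abs, abs_of_pos (by positivity)]
    field_simp
  · intro τ ε hτ hε
    set t := max 1 ((τ+1)/‖y‖) with htdef
    have ht1 : (1:ℝ) ≤ t := le_max_left _ _
    have htpos : (0:ℝ) < t := lt_of_lt_of_le one_pos ht1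
    refine ⟨t • y, hray t ht1, ?_, ?_⟩
    · have ht2 : (τ+1)/‖y‖ ≤ t := le_max_right _ _
      have : τ + 1 ≤ t * ‖y‖ := (div_le_iff₀ hyn).mp ht2
      rw [norm_smul, Real.norm_eq_abs, abs_of_pos htpos]
      linarith
    · have heq : ‖t • y‖⁻¹ • (t • y) = ‖y‖⁻¹ • y := by
        rw [norm_smul, Real.norm_eq_abs, abs_of_pos htpos, smul_smul, mul_inv,
          mul_assoc, mul_comm t⁻¹, mul_assoc, mul_inv_cancel₀ htpos.ne', mul_one]
      rw [heq]
      simpa using hε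

lemma subset_closure_homHull_frontier {K : Set (ℝ × ℝ)} (hKcl : IsClosed K)
    (hKcv : Convex ℝ K) (hrec : (recDirections K).Subsingleton)
    (hfr : (frontier K).Nonempty) : K ⊆ closure (homHull (frontier K)) := by
  intro y hy
  by_cases hyf : y ∈ frontier K
  · exact subset_closure ⟨1, zero_le_one, y, hyf, (one_smul ℝ y).symm⟩
  have hyint : y ∈ interior K := by
    rw [hKcl.frontier_eq] at hyf
    simp only [Set.mem_diff, not_and, not_not] at hyf
    exact hyf hy
  by_cases hy0 : y = 0
  · obtain ⟨z, hz⟩ := hfr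
    exact subset_closure ⟨0, le_refl 0, z, hz, by simp [hy0]⟩
  rw [Metric.mem_closure_iff]
  intro ε hε
  obtain ⟨δ, hδ, hball⟩ := Metric.isOpen_iff.mp isOpen_interior y hyint
  have hyn : (0:ℝ) < ‖y‖ := norm_pos_iff.mpr hy0
  set w : ℝ × ℝ := (-y.2, y.1) with hwdef
  have hwn : ‖w‖ = ‖y‖ := by
    simp only [hwdef, Prod.norm_def, norm_neg]
    exact max_comm _ _
  set c : ℝ := min δ ε / (2 * ‖y‖) with hcdef
  have hcpos : 0 < c := by positivity
  have hdist : ‖c • w‖ = min δ ε / 2 := by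
    rw [norm_smul, Real.norm_eq_abs, abs_of_pos hcpos, hwn, hcdef]
    field_simp
  have hsmall : ‖c • w‖ < δ ∧ ‖c • w‖ < ε := by
    constructor <;> rw [hdist]
    · have := min_le_left δ ε; linarith
    · have := min_le_right δ ε; linarith
  have hmem : ∀ σ : ℝ, |σ| = 1 → y + (σ * c) • w ∈ K := by
    intro σ hσ
    apply interior_subset
    apply hball
    rw [Metric.mem_ball, dist_eq_norm]
    have : y + (σ * c) • w - y = σ • (c • w) := by
      rw [smul_smul, add_sub_cancel_left]
    rw [this, norm_smul, Real.norm_eq_abs, hσ, one_mul]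
    exact hsmall.1
  set yp : ℝ × ℝ := y + c • w with hyp
  set ym : ℝ × ℝ := y - c • w with hym
  have hypK : yp ∈ K := by
    have := hmem 1 (by norm_num); simpa [hyp] using this
  have hymK : ym ∈ K := by
    have := hmem (-1) (by norm_num)
    simp only [neg_mul, one_mul, neg_smul] at this
    simpa [hym, sub_eq_add_neg] using this
  have hy12 : y.1 ≠ 0 ∨ y.2 ≠ 0 := by
    by_contra h
    push_neg at h
    exact hy0 (Prod.ext h.1 h.2)
  have hysq : 0 < y.1^2 + y.2^2 := by
    rcases hy12 with h | h
    · positivity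
    · positivity
  have hyp0 : yp ≠ 0 := by
    intro h
    have h1 : y.1 + c * (-y.2) = 0 := congrArg Prod.fst h
    have h2 : y.2 + c * y.1 = 0 := congrArg Prod.snd h
    have : y.1^2 + y.2^2 = 0 := by linear_combination y.1 * h1 + y.2 * h2
    linarith
  have hym0 : ym ≠ 0 := by
    intro h
    have h1 : y.1 - c * (-y.2) = 0 := congrArg Prod.fst h
    have h2 : y.2 - c * y.1 = 0 := congrArg Prod.snd h
    have : y.1^2 + y.2^2 = 0 := by linear_combination y.1 * h1 + y.2 * h2
    linarith
  -- not both rays can be contained in K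
  have hkey : (∃ t : ℝ, 1 ≤ t ∧ t • yp ∉ K) ∨ (∃ t : ℝ, 1 ≤ t ∧ t • ym ∉ K) := by
    by_contra h
    push_neg at h
    obtain ⟨hp, hm⟩ := h
    have hsp := recDir_of_ray hyp0 hp
    have hsm := recDir_of_ray hym0 hm
    have heq := hrec hsp hsm
    have hpn : (0:ℝ) < ‖yp‖ := norm_pos_iff.mpr hyp0
    have hmn : (0:ℝ) < ‖ym‖ := norm_pos_iff.mpr hym0
    set a := ‖yp‖⁻¹ with hadef
    set b := ‖ym‖⁻¹ with hbdef
    have hapos : 0 < a := by positivity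
    have hbpos : 0 < b := by positivity
    have e1 : a * (y.1 + c * (-y.2)) = b * (y.1 - c * (-y.2)) := congrArg Prod.fst heq
    have e2 : a * (y.2 + c * y.1) = b * (y.2 - c * y.1) := congrArg Prod.snd heq
    have hz : (a + b) * c * (y.1^2 + y.2^2) = 0 := by
      linear_combination y.1 * e2 - y.2 * e1
    have := mul_pos (mul_pos (add_pos hapos hbpos) hcpos) hysq
    linarith
  rcases hkey with ⟨t, ht1, htK⟩ | ⟨t, ht1, htK⟩
  · refine ⟨yp, mem_homHull_frontier_of_ray_exits hKcl hKcv hypK hyp0 ht1 htK, ?_⟩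
    rw [dist_eq_norm]
    simpa [hyp] using hsmall.2
  · refine ⟨ym, mem_homHull_frontier_of_ray_exits hKcl hKcv hymK hym0 ht1 htK, ?_⟩
    rw [dist_eq_norm]
    have : y - ym = c • w := by rw [hym]; abel
    rw [this]
    exact hsmall.2

/-- If `K ⊆ ℝ²` is closed and convex with at most one recession direction, then its
boundary is homogenization-convex. -/
theorem frontier_homogenizationConvex_of_subsingleton_recDirections
    (K : Set (ℝ × ℝ)) (hKcl : IsClosed K) (hKcv : Convex ℝ K)
    (hrec : (recDirections K).Subsingleton) :
    Convex ℝ (closure (homHull (frontier K))) := by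
  by_cases hfr : (frontier K).Nonempty
  · have hsub : K ⊆ closure (homHull (frontier K)) :=
      subset_closure_homHull_frontier hKcl hKcv hrec hfr
    have h1 : closure (homHull (frontier K)) = closure (homHull K) := by
      apply Set.Subset.antisymm
      · exact closure_mono (fun z ⟨τ, hτ, x, hx, hzx⟩ =>
          ⟨τ, hτ, x, hKcl.frontier_subset hx, hzx⟩)
      · apply closure_minimal _ isClosed_closure
        rintro z ⟨τ, hτ, x, hx, rfl⟩
        rw [Metric.mem_closure_iff]
        intro ε hε
        rcases eq_or_lt_of_le hτ with hτ0 | hτ0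
        · obtain ⟨zf, hzf⟩ := hfr
          refine ⟨0, ⟨0, le_refl 0, zf, hzf, by simp⟩, ?_⟩
          rw [← hτ0]
          simpa using hε
        · have hx' := hsub hx
          rw [Metric.mem_closure_iff] at hx'
          obtain ⟨bb, hbb, hdbb⟩ := hx' (ε / τ) (by positivity)
          refine ⟨τ • bb, homHull_smul_mem hτ hbb, ?_⟩
          rw [dist_eq_norm, ← smul_sub, norm_smul, Real.norm_eq_abs, abs_of_pos hτ0]
          rw [dist_eq_norm] at hdbb
          calc τ * ‖x - bb‖ < τ * (ε / τ) := by
                exact (mul_lt_mul_iff_right₀ hτ0).mpr hdbb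
            _ = ε := by field_simp
    rw [h1]
    exact (convex_homHull hKcv).closure
  · rw [Set.not_nonempty_iff_eq_empty] at hfr
    have : homHull (frontier K) = ∅ := by
      rw [hfr]
      ext z
      simp [homHull]
    rw [this, closure_empty]
    exact convex_empty
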